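/- For every integer n ≥ 2 coprime to 3, the second derivative of the real function Δₙ(t) = (t^{3n} − 1)(t − 1)/((t³ − 1)(tⁿ − 1)t^{n−1}) tends to 2(n² − 1)/3 as t tends to 1 from the right; equivalently ½Δₙ''(1) = (n² − 1)/3, which is the Casson invariant of the (3,n) torus knot and is a positive integer. -/

import Mathlib

open Finset Filter Set

namespace TorusAux

/-- geometric sum -/
noncomputable def S (m : ℕ) (t : ℝ) : ℝ := ∑ i ∈ range m, t ^ i
noncomputable def S1 (m : ℕ) (t : ℝ) : ℝ := ∑ i ∈ range m, (i:ℝ) * t ^ (i-1)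
noncomputable def S2 (m : ℕ) (t : ℝ) : ℝ := ∑ i ∈ range m, (i:ℝ) * (((i-1:ℕ):ℝ) * t ^ (i-1-1))

lemma hasDerivAt_S (m : ℕ) (t : ℝ) : HasDerivAt (S m) (S1 m t) t := by
  unfold S S1; exact HasDerivAt.fun_sum fun i _ => hasDerivAt_pow i t

lemma hasDerivAt_S1 (m : ℕ) (t : ℝ) : HasDerivAt (S1 m) (S2 m t) t := by
  unfold S1 S2; exact HasDerivAt.fun_sum fun i _ => (hasDerivAt_pow (i-1) t).const_mul (i:ℝ)

@[fun_prop] lemma cont_S (m : ℕ) : Continuous (S m) := by unfold S; fun_prop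
@[fun_prop] lemma cont_S1 (m : ℕ) : Continuous (S1 m) := by unfold S1; fun_prop
@[fun_prop] lemma cont_S2 (m : ℕ) : Continuous (S2 m) := by unfold S2; fun_prop

lemma S_one (m : ℕ) : S m 1 = m := by simp [S]
lemma S1_one (m : ℕ) : S1 m 1 = m * ((m:ℝ) - 1) / 2 := by
  unfold S1
  induction m with
  | zero => simp
  | succ k ih => rw [Finset.sum_range_succ, ih]; push_cast; ring

lemma S2_one (m : ℕ) : S2 m 1 = m * ((m:ℝ) - 1) * ((m:ℝ) - 2) / 3 := by
  unfold S2
  induction m with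
  | zero => simp
  | succ k ih =>
    rw [Finset.sum_range_succ, ih]
    rcases Nat.eq_zero_or_pos k with hk | hk
    · subst hk; norm_num
    · rw [Nat.cast_sub hk]; push_cast; ring

variable (n : ℕ)

noncomputable def D (t : ℝ) : ℝ := S 3 t * S n t * t ^ (n-1)
noncomputable def D1 (t : ℝ) : ℝ :=
  (S1 3 t * S n t + S 3 t * S1 n t) * t ^ (n-1)
    + S 3 t * S n t * (((n-1:ℕ):ℝ) * t ^ (n-1-1))
noncomputable def D2 (t : ℝ) : ℝ :=
  (((S2 3 t * S n t + S1 3 t * S1 n t) + (S1 3 t * S1 n t + S 3 t * S2 n t)) * t ^ (n-1)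
    + (S1 3 t * S n t + S 3 t * S1 n t) * (((n-1:ℕ):ℝ) * t ^ (n-1-1)))
  + ((S1 3 t * S n t + S 3 t * S1 n t) * (((n-1:ℕ):ℝ) * t ^ (n-1-1))
    + S 3 t * S n t * (((n-1:ℕ):ℝ) * (((n-1-1:ℕ):ℝ) * t ^ (n-1-1-1))))

noncomputable def g (t : ℝ) : ℝ := S (3*n) t / D n t
noncomputable def g1 (t : ℝ) : ℝ := (S1 (3*n) t * D n t - S (3*n) t * D1 n t) / (D n t) ^ 2
noncomputable def G2 (t : ℝ) : ℝ :=
  (((S2 (3*n) t * D n t + S1 (3*n) t * D1 n t) - (S1 (3*n) t * D1 n t + S (3*n) t * D2 n t))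
      * (D n t) ^ 2
    - (S1 (3*n) t * D n t - S (3*n) t * D1 n t) * (2 * D n t * D1 n t)) / ((D n t) ^ 2) ^ 2

lemma hasDerivAt_D (t : ℝ) : HasDerivAt (D n) (D1 n t) t := by
  have h := ((hasDerivAt_S 3 t).mul (hasDerivAt_S n t)).mul
    ((hasDerivAt_pow (n-1) t).const_mul (1:ℝ))
  have h2 : HasDerivAt (fun x : ℝ => S 3 x * S n x * (1 * x ^ (n-1)))
      ((S1 3 t * S n t + S 3 t * S1 n t) * (1 * t ^ (n-1))
        + S 3 t * S n t * (1 * (((n-1:ℕ):ℝ) * t ^ (n-1-1)))) t := h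
  have h3 := h2
  simp only [one_mul] at h3
  exact h3

@[fun_prop] lemma cont_D : Continuous (D n) := by unfold D; fun_prop
@[fun_prop] lemma cont_D1 : Continuous (D1 n) := by unfold D1; fun_prop
@[fun_prop] lemma cont_D2 : Continuous (D2 n) := by unfold D2; fun_prop

lemma hasDerivAt_D1 (t : ℝ) : HasDerivAt (D1 n) (D2 n t) t := by
  have hp : HasDerivAt (fun x : ℝ => x ^ (n-1)) (((n-1:ℕ):ℝ) * t ^ (n-1-1)) t :=
    hasDerivAt_pow (n-1) t
  have hp1 : HasDerivAt (fun x : ℝ => ((n-1:ℕ):ℝ) * x ^ (n-1-1))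
      (((n-1:ℕ):ℝ) * (((n-1-1:ℕ):ℝ) * t ^ (n-1-1-1))) t :=
    (hasDerivAt_pow (n-1-1) t).const_mul _
  exact ((((hasDerivAt_S1 3 t).mul (hasDerivAt_S n t)).add
      ((hasDerivAt_S 3 t).mul (hasDerivAt_S1 n t))).mul hp).add
    (((hasDerivAt_S 3 t).mul (hasDerivAt_S n t)).mul hp1)

lemma hasDerivAt_g {t : ℝ} (ht : D n t ≠ 0) : HasDerivAt (g n) (g1 n t) t :=
  (hasDerivAt_S (3*n) t).div (hasDerivAt_D n t) ht

lemma hasDerivAt_g1 {t : ℝ} (ht : D n t ≠ 0) : HasDerivAt (g1 n) (G2 n t) t := by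
  have hu : HasDerivAt (fun x => S1 (3*n) x * D n x - S (3*n) x * D1 n x)
      ((S2 (3*n) t * D n t + S1 (3*n) t * D1 n t)
        - (S1 (3*n) t * D1 n t + S (3*n) t * D2 n t)) t :=
    ((hasDerivAt_S1 (3*n) t).mul (hasDerivAt_D n t)).sub
      ((hasDerivAt_S (3*n) t).mul (hasDerivAt_D1 n t))
  have hv : HasDerivAt (fun x => (D n x) ^ 2) (2 * D n t * D1 n t) t := by
    have := (hasDerivAt_D n t).pow 2
    norm_num at this
    exact this
  have := hu.div hv (pow_ne_zero 2 ht)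
  exact this

lemma D_one (hn : 2 ≤ n) : D n 1 = 3 * n := by simp [D, S_one]

lemma G2_one (hn : 2 ≤ n) : G2 n 1 = 2 * ((n:ℝ) ^ 2 - 1) / 3 := by
  have h1 : (1:ℕ) ≤ n := by omega
  have h2 : (1:ℕ) ≤ n - 1 := by omega
  have hc1 : ((n-1:ℕ):ℝ) = (n:ℝ) - 1 := by rw [Nat.cast_sub h1]; norm_num
  have hc2 : ((n-1-1:ℕ):ℝ) = (n:ℝ) - 2 := by
    rw [Nat.cast_sub h2, Nat.cast_sub h1]; push_cast; ring
  have hn0 : (n:ℝ) ≠ 0 := by positivity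
  simp only [G2, D, D1, D2, S_one, S1_one, S2_one, one_pow, hc1, hc2]
  push_cast
  field_simp
  ring

end TorusAux

/-- The normalized Alexander polynomial of the (3,n) torus knot, as a real function. -/
noncomputable def torusAlexander (n : ℕ) (t : ℝ) : ℝ :=
  (t ^ (3 * n) - 1) * (t - 1) / ((t ^ 3 - 1) * (t ^ n - 1) * t ^ (n - 1))

/-- For every n ≥ 2 coprime to 3, the second derivative of Δₙ tends to 2(n² − 1)/3 as
t → 1⁺; equivalently ½Δₙ''(1) = (n² − 1)/3, the Casson invariant of the (3,n) torus
knot, which is a positive integer. -/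
theorem torusAlexander_second_deriv (n : ℕ) (hn : 2 ≤ n) (h : Nat.Coprime n 3) :
    Filter.Tendsto (deriv (deriv (torusAlexander n))) (nhdsWithin 1 (Set.Ioi 1))
      (nhds (2 * ((n : ℝ) ^ 2 - 1) / 3)) ∧
    ∃ k : ℕ, 0 < k ∧ ((n : ℝ) ^ 2 - 1) / 3 = (k : ℝ) := by
  constructor
  · have hD1 : TorusAux.D n 1 ≠ 0 := by
      rw [TorusAux.D_one n hn]
      have : (0:ℝ) < n := by positivity
      positivity
    have hUopen : IsOpen {t : ℝ | TorusAux.D n t ≠ 0} :=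
      isOpen_compl_singleton.preimage (TorusAux.cont_D n)
    have hU1 : {t : ℝ | TorusAux.D n t ≠ 0} ∈ nhds (1:ℝ) := hUopen.mem_nhds hD1
    have key : Set.EqOn (torusAlexander n) (TorusAux.g n) (Set.Ioi 1) := by
      intro t ht
      have ht1 : (1:ℝ) < t := ht
      have ht0 : (0:ℝ) < t := by linarith
      have hsub : t - 1 ≠ 0 := by intro hc; nlinarith
      have hpos : ∀ m : ℕ, 1 ≤ m → (0:ℝ) < ∑ i ∈ range m, t ^ i := fun m hm =>
        Finset.sum_pos (fun i _ => pow_pos ht0 i) (Finset.nonempty_range_iff.mpr (by omega))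
      have h3 := (hpos 3 (by norm_num)).ne'
      have hn' := (hpos n (by omega)).ne'
      have hpow : t ^ (n-1) ≠ 0 := pow_ne_zero _ ht0.ne'
      simp only [torusAlexander, TorusAux.g, TorusAux.D, TorusAux.S]
      rw [← geom_sum_mul, ← geom_sum_mul, ← geom_sum_mul]
      field_simp
    have f1 : Set.EqOn (deriv (TorusAux.g n)) (TorusAux.g1 n) {t : ℝ | TorusAux.D n t ≠ 0} :=
      fun x hx => (TorusAux.hasDerivAt_g n hx).deriv
    have f2 : ∀ x ∈ {t : ℝ | TorusAux.D n t ≠ 0},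
        deriv (deriv (TorusAux.g n)) x = TorusAux.G2 n x := by
      intro x hx
      have hev : deriv (TorusAux.g n) =ᶠ[nhds x] TorusAux.g1 n :=
        Filter.eventuallyEq_of_mem (hUopen.mem_nhds hx) f1
      rw [hev.deriv_eq]
      exact (TorusAux.hasDerivAt_g1 n hx).deriv
    have e1 : Set.EqOn (deriv (torusAlexander n)) (deriv (TorusAux.g n)) (Set.Ioi 1) :=
      fun x hx => (Filter.eventuallyEq_of_mem (isOpen_Ioi.mem_nhds hx) key).deriv_eq
    have e2 : ∀ x ∈ Set.Ioi (1:ℝ),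
        deriv (deriv (torusAlexander n)) x = deriv (deriv (TorusAux.g n)) x :=
      fun x hx => (Filter.eventuallyEq_of_mem (isOpen_Ioi.mem_nhds hx) e1).deriv_eq
    have hcont : ContinuousAt (TorusAux.G2 n) 1 := by
      unfold TorusAux.G2
      apply ContinuousAt.div
      · fun_prop
      · fun_prop
      · exact pow_ne_zero 2 (pow_ne_zero 2 hD1)
    have tend : Filter.Tendsto (TorusAux.G2 n) (nhdsWithin 1 (Set.Ioi 1))
        (nhds (TorusAux.G2 n 1)) := hcont.continuousWithinAt
    rw [TorusAux.G2_one n hn] at tend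
    apply tend.congr'
    have hmem : ({t : ℝ | TorusAux.D n t ≠ 0} ∩ Set.Ioi 1) ∈ nhdsWithin 1 (Set.Ioi 1) :=
      Filter.inter_mem (mem_nhdsWithin_of_mem_nhds hU1) self_mem_nhdsWithin
    exact Filter.eventuallyEq_of_mem hmem
      (fun x hx => ((e2 x hx.2).trans (f2 x hx.1)).symm)
  · have h3 : n % 3 = 1 ∨ n % 3 = 2 := by
      have hm := Nat.mod_lt n (show 0 < 3 by norm_num)
      by_contra hcon
      push_neg at hcon
      have h0 : n % 3 = 0 := by omega
      have hd : (3:ℕ) ∣ n := Nat.dvd_of_mod_eq_zero h0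
      have : (3:ℕ) ∣ 1 := h ▸ Nat.dvd_gcd hd dvd_rfl
      omega
    have hsq : n ^ 2 % 3 = 1 := by
      rw [Nat.pow_mod]; rcases h3 with h3 | h3 <;> rw [h3] <;> norm_num
    have hge : 4 ≤ n ^ 2 := by nlinarith
    obtain ⟨k, hk⟩ : ∃ k, n ^ 2 = 3 * k + 1 := ⟨n ^ 2 / 3, by omega⟩
    refine ⟨k, by omega, ?_⟩
    have hkr : ((n:ℝ)) ^ 2 = 3 * k + 1 := by exact_mod_cast congrArg (Nat.cast : ℕ → ℝ) hk
    rw [hkr]; ring
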